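/- Correctness of the delta transformation for IncNRC+: for every expression h built from R, ∅, input-independent atoms, ⊎, ×, for-comprehension, flatten, and ⊖, and for all bags R and ΔR, ⟦h⟧(R ⊎ ΔR) = ⟦h⟧(R) ⊎ ⟦δ(h)⟧(R, ΔR). -/

import Mathlib

/-- Nested relational types. -/
inductive Ty : Type where
  | base : Ty
  | prod (t₁ t₂ : Ty) : Ty
  | bag (t : Ty) : Ty

/-- Denotation of types; `bag t` denotes bags, i.e. finitely supported
functions into `ℤ`. -/
def Ty.denote : Ty → Type
  | .base => ℕ
  | .prod t₁ t₂ => t₁.denote × t₂.denote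
  | .bag t => t.denote →₀ ℤ

/-- Bag Cartesian product: `(X × Y)(a,b) = X(a) · Y(b)`. -/
noncomputable def bagProd {A B : Type*} (X : A →₀ ℤ) (Y : B →₀ ℤ) : A × B →₀ ℤ :=
  Finsupp.onFinset (X.support ×ˢ Y.support) (fun p => X p.1 * Y p.2)
    (fun p hp => Finset.mem_product.mpr
      ⟨Finsupp.mem_support_iff.mpr (left_ne_zero_of_mul hp),
       Finsupp.mem_support_iff.mpr (right_ne_zero_of_mul hp)⟩)

/-- The for-comprehension (bind): `bind(X, f)(b) = Σ_a X(a) · f(a)(b)`. -/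
noncomputable def bagBind {A B : Type*} (X : A →₀ ℤ) (f : A → (B →₀ ℤ)) : B →₀ ℤ :=
  X.sum fun a m => m • f a

/-- Flatten: `flatten(X)(b) = Σ_v X(v) · v(b)`. -/
noncomputable def bagFlatten {B : Type*} (X : (B →₀ ℤ) →₀ ℤ) : B →₀ ℤ :=
  X.sum fun v m => m • v

/-- IncNRC⁺ expressions of bag type `Bag t`, over a single input relation of
bag type `Bag tA` (`rel`) and its update (`deltaRel`).  Input-independent
atoms are constant bags; the for-comprehension binds a variable of the
element type of its source. -/
inductive Expr (tA : Ty) : Ty → Type where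
  | rel : Expr tA tA
  | deltaRel : Expr tA tA
  | empty : ∀ {t}, Expr tA t
  | atom : ∀ {t}, (Ty.denote t →₀ ℤ) → Expr tA t
  | union : ∀ {t}, Expr tA t → Expr tA t → Expr tA t
  | prod : ∀ {t₁ t₂}, Expr tA t₁ → Expr tA t₂ → Expr tA (.prod t₁ t₂)
  | forC : ∀ {t₁ t₂}, Expr tA t₁ → (Ty.denote t₁ → Expr tA t₂) → Expr tA t₂
  | flatten : ∀ {t}, Expr tA (.bag t) → Expr tA t
  | neg : ∀ {t}, Expr tA t → Expr tA t

/-- Denotational semantics: an expression denotes a bag, given the input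
relation `R` and the update `ΔR`. -/
noncomputable def Expr.denote {tA : Ty} (R ΔR : Ty.denote tA →₀ ℤ) :
    ∀ {t : Ty}, Expr tA t → (Ty.denote t →₀ ℤ)
  | _, .rel => R
  | _, .deltaRel => ΔR
  | _, .empty => 0
  | _, .atom v => v
  | _, .union e₁ e₂ => Expr.denote R ΔR e₁ + Expr.denote R ΔR e₂
  | _, .prod e₁ e₂ => bagProd (Expr.denote R ΔR e₁) (Expr.denote R ΔR e₂)
  | _, .forC e₁ f => bagBind (Expr.denote R ΔR e₁) fun x => Expr.denote R ΔR (f x)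
  | _, .flatten e => bagFlatten (Expr.denote R ΔR e)
  | _, .neg e => -Expr.denote R ΔR e
termination_by structural _ e => e

/-- The syntactic delta transformation. -/
def Expr.delta {tA : Ty} : ∀ {t : Ty}, Expr tA t → Expr tA t
  | _, .rel => .deltaRel
  | _, .deltaRel => .empty
  | _, .empty => .empty
  | _, .atom _ => .empty
  | _, .union e₁ e₂ => .union (Expr.delta e₁) (Expr.delta e₂)
  | _, .prod e₁ e₂ =>
      .union (.union (.prod (Expr.delta e₁) e₂) (.prod e₁ (Expr.delta e₂)))
        (.prod (Expr.delta e₁) (Expr.delta e₂))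
  | _, .forC e₁ f =>
      .union (.union (.forC (Expr.delta e₁) f) (.forC e₁ fun x => Expr.delta (f x)))
        (.forC (Expr.delta e₁) fun x => Expr.delta (f x))
  | _, .flatten e => .flatten (Expr.delta e)
  | _, .neg e => .neg (Expr.delta e)

/-- Correctness of the delta transformation for IncNRC⁺:
`⟦h⟧(R ⊎ ΔR) = ⟦h⟧(R) ⊎ ⟦δ(h)⟧(R, ΔR)`. -/
lemma bagProd_apply {A B : Type*} (X : A →₀ ℤ) (Y : B →₀ ℤ) (p : A × B) :
    bagProd X Y p = X p.1 * Y p.2 := rfl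

lemma bagProd_bilin {A B : Type*} (X X' : A →₀ ℤ) (Y Y' : B →₀ ℤ) :
    bagProd (X + X') (Y + Y') =
      bagProd X Y + (bagProd X' Y + bagProd X Y' + bagProd X' Y') := by
  ext p; simp [bagProd_apply]; ring

lemma bagBind_add_left {A B : Type*} (X X' : A →₀ ℤ) (f : A → (B →₀ ℤ)) :
    bagBind (X + X') f = bagBind X f + bagBind X' f := by
  unfold bagBind
  exact Finsupp.sum_add_index' (by simp) (by intros; rw [add_smul])

lemma bagBind_add_right {A B : Type*} (X : A →₀ ℤ) (f g : A → (B →₀ ℤ)) :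
    bagBind X (fun a => f a + g a) = bagBind X f + bagBind X g := by
  unfold bagBind
  rw [← Finsupp.sum_add]
  exact Finsupp.sum_congr fun a _ => smul_add _ _ _

lemma bagFlatten_add {B : Type*} (X X' : (B →₀ ℤ) →₀ ℤ) :
    bagFlatten (X + X') = bagFlatten X + bagFlatten X' := by
  unfold bagFlatten
  exact Finsupp.sum_add_index' (by simp) (by intros; rw [add_smul])

theorem delta_correct {tA t : Ty} (h : Expr tA t) (R ΔR : Ty.denote tA →₀ ℤ) :
    Expr.denote (R + ΔR) ΔR h = Expr.denote R ΔR h + Expr.denote R ΔR (Expr.delta h) := by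
  induction h with
  | rel => simp [Expr.denote, Expr.delta]
  | deltaRel => simp [Expr.denote, Expr.delta]
  | empty => simp [Expr.denote, Expr.delta]
  | atom v => simp [Expr.denote, Expr.delta]
  | union e₁ e₂ ih₁ ih₂ =>
      simp only [Expr.denote, Expr.delta, ih₁, ih₂]; abel
  | prod e₁ e₂ ih₁ ih₂ =>
      simp only [Expr.denote, Expr.delta, ih₁, ih₂, bagProd_bilin]
      rfl
  | forC e₁ f ih₁ ihf =>
      simp only [Expr.denote, Expr.delta, ih₁]
      simp only [fun x => ihf x]
      rw [bagBind_add_left, bagBind_add_right, bagBind_add_right]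
      abel
  | flatten e ih =>
      simp only [Expr.denote, Expr.delta, ih]
      exact bagFlatten_add _ _
  | neg e ih =>
      simp only [Expr.denote, Expr.delta, ih]; abel
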